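/- Define f : ℝ → ℝ by f(x) = x³·exp(-1/x) for x > 0 and f(x) = 0 for x ≤ 0. Then: (i) for every α ∈ (0,1) there exist C > 0 and δ > 0 such that |f'(x)| ≤ C·f(x)^α for all x ∈ (0, δ); and (ii) f'(x)/f(x) → +∞ as x → 0⁺ (so no such bound holds with exponent α = 1). -/

import Mathlib

open Set Filter

/-- The function of Example 3.4 of the paper: `f x = x³·exp(-1/x)` for `x > 0`
and `f x = 0` for `x ≤ 0`. -/
noncomputable def exampleFun : ℝ → ℝ :=
  fun x => if 0 < x then x ^ 3 * Real.exp (-1 / x) else 0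

lemma exampleFun_deriv {x : ℝ} (hx : 0 < x) :
    deriv exampleFun x = (3 * x ^ 2 + x) * Real.exp (-1 / x) := by
  have hev : exampleFun =ᶠ[nhds x] fun y => y ^ 3 * Real.exp (-1 / y) := by
    filter_upwards [IsOpen.mem_nhds isOpen_Ioi hx] with y hy
    simp only [exampleFun, if_pos (mem_Ioi.mp hy)]
  rw [hev.deriv_eq]
  have h1 : HasDerivAt (fun y : ℝ => -1 / y) (1 / x ^ 2) x := by
    have := (hasDerivAt_inv (ne_of_gt hx)).fun_neg
    simpa [neg_div, one_div] using this
  have h2 : HasDerivAt (fun y : ℝ => Real.exp (-1 / y))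
      (Real.exp (-1 / x) * (1 / x ^ 2)) x := (Real.hasDerivAt_exp _).comp x h1
  have h3 : HasDerivAt (fun y : ℝ => y ^ 3) (3 * x ^ 2) x := by
    simpa using hasDerivAt_pow 3 x
  have := h3.fun_mul h2
  rw [this.deriv]
  field_simp

/-- **Analytic content of Example 3.4 of the paper.** For every `α ∈ (0,1)` there are
`C > 0` and `δ > 0` with `|f'(x)| ≤ C·f(x)^α` for `x ∈ (0, δ)`, while
`f'(x)/f(x) → +∞` as `x → 0⁺`, so no such bound holds with `α = 1`. -/
theorem exampleFun_holder_bounds :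
    (∀ α ∈ Set.Ioo (0 : ℝ) 1, ∃ C > (0 : ℝ), ∃ δ > (0 : ℝ),
      ∀ x ∈ Set.Ioo (0 : ℝ) δ, |deriv exampleFun x| ≤ C * (exampleFun x) ^ α) ∧
    Tendsto (fun x => deriv exampleFun x / exampleFun x)
      (nhdsWithin 0 (Set.Ioi 0)) atTop := by
  constructor
  · rintro α ⟨hα0, hα1⟩
    refine ⟨4, by norm_num, ?_⟩
    have hkey : Tendsto (fun x : ℝ => (x⁻¹) ^ (3 * α) * Real.exp (-(1 - α) * x⁻¹))
        (nhdsWithin 0 (Set.Ioi 0)) (nhds 0) :=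
      (tendsto_rpow_mul_exp_neg_mul_atTop_nhds_zero (3 * α) (1 - α)
        (by linarith)).comp tendsto_inv_nhdsGT_zero
    have hev : ∀ᶠ x in nhdsWithin (0:ℝ) (Set.Ioi 0),
        (x⁻¹) ^ (3 * α) * Real.exp (-(1 - α) * x⁻¹) ≤ 1 :=
      hkey.eventually (ge_mem_nhds one_pos)
    obtain ⟨u, hu, hsub⟩ := mem_nhdsGT_iff_exists_Ioo_subset.mp hev
    refine ⟨min u 1, lt_min (mem_Ioi.mp hu) one_pos, ?_⟩
    rintro x ⟨hx0, hxu⟩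
    have hx1 : x < 1 := lt_of_lt_of_le hxu (min_le_right _ _)
    have hxu' : x < u := lt_of_lt_of_le hxu (min_le_left _ _)
    have hb : (x⁻¹) ^ (3 * α) * Real.exp (-(1 - α) * x⁻¹) ≤ 1 := hsub ⟨hx0, hxu'⟩
    -- rewrite the bound: exp (-(1-α)/x) ≤ x ^ (3α)
    have hxα : (0:ℝ) < x ^ (3 * α) := Real.rpow_pos_of_pos hx0 _
    have hinv : (x⁻¹) ^ (3 * α) = (x ^ (3 * α))⁻¹ := Real.inv_rpow hx0.le _
    have hb' : Real.exp (-(1 - α) * x⁻¹) ≤ x ^ (3 * α) := by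
      rw [hinv] at hb
      calc Real.exp (-(1 - α) * x⁻¹)
          = x ^ (3 * α) * ((x ^ (3 * α))⁻¹ * Real.exp (-(1 - α) * x⁻¹)) := by
            field_simp
        _ ≤ x ^ (3 * α) * 1 := by
            exact mul_le_mul_of_nonneg_left hb hxα.le
        _ = x ^ (3 * α) := mul_one _
    rw [exampleFun_deriv hx0]
    simp only [exampleFun, if_pos hx0]
    have hxpos3 : (0:ℝ) ≤ x ^ 3 := by positivity
    have hrpow : (x ^ 3 * Real.exp (-1 / x)) ^ α
        = x ^ (3 * α) * Real.exp (-α / x) := by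
      rw [Real.mul_rpow hxpos3 (Real.exp_pos _).le]
      congr 1
      · rw [← Real.rpow_natCast x 3, ← Real.rpow_mul hx0.le]
        norm_num
      · rw [← Real.exp_mul]
        congr 1
        field_simp
    rw [hrpow]
    have habs : |(3 * x ^ 2 + x) * Real.exp (-1 / x)|
        = (3 * x ^ 2 + x) * Real.exp (-1 / x) := by
      apply abs_of_nonneg
      positivity
    rw [habs]
    have hsplit : Real.exp (-1 / x) = Real.exp (-α / x) * Real.exp (-(1 - α) * x⁻¹) := by
      rw [← Real.exp_add]
      congr 1
      field_simp
      ring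
    have hcoef : 3 * x ^ 2 + x ≤ 4 := by nlinarith
    calc (3 * x ^ 2 + x) * Real.exp (-1 / x)
        ≤ 4 * Real.exp (-1 / x) :=
          mul_le_mul_of_nonneg_right hcoef (Real.exp_pos _).le
      _ = 4 * (Real.exp (-α / x) * Real.exp (-(1 - α) * x⁻¹)) := by rw [← hsplit]
      _ ≤ 4 * (Real.exp (-α / x) * x ^ (3 * α)) := by
          apply mul_le_mul_of_nonneg_left _ (by norm_num)
          exact mul_le_mul_of_nonneg_left hb' (Real.exp_pos _).le
      _ = 4 * (x ^ (3 * α) * Real.exp (-α / x)) := by ring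
  · have heq : ∀ᶠ x in nhdsWithin (0:ℝ) (Set.Ioi 0),
        3 * x⁻¹ + x⁻¹ * x⁻¹ = deriv exampleFun x / exampleFun x := by
      filter_upwards [self_mem_nhdsWithin] with x hx
      have hx0 : (0:ℝ) < x := hx
      rw [exampleFun_deriv hx0]
      simp only [exampleFun, if_pos hx0]
      rw [mul_div_mul_right _ _ (Real.exp_ne_zero _)]
      field_simp
    apply Tendsto.congr' heq
    have h1 : Tendsto (fun x : ℝ => 3 * x⁻¹) (nhdsWithin 0 (Set.Ioi 0)) atTop :=
      (tendsto_inv_nhdsGT_zero).const_mul_atTop (by norm_num)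
    exact tendsto_atTop_add_right_of_le' _ 0 h1 (by
      filter_upwards [self_mem_nhdsWithin] with x hx
      have : (0:ℝ) < x := hx
      positivity)
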